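/- With the same setup, if perfect state transfer occurs from vertex j to vertex k at time π/2, then e^{i(π/2)Λ} Hᵀ e_j = Hᵀ e_k; i.e., the phase relating the two eigenvector expansions is exactly 1. -/

import Mathlib

open Matrix

/-- Perfect state transfer at time π/2 for a real Hamiltonian `L`. -/
noncomputable def pstHalfPi {m : Type*} [Fintype m] [DecidableEq m]
    (L : Matrix m m ℝ) (j k : m) : Prop :=
  ‖(NormedSpace.exp ((Complex.I * ((Real.pi / 2 : ℝ) : ℂ)) •
        L.map (fun x => (x : ℂ)))) j k‖ = 1

/-- Sum rigidity: if all terms are ±1, the first is 1, and the absolute value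
of the sum is `n`, then all terms are 1. -/
lemma all_one_of_abs_sum (n : ℕ) [NeZero n] (a : Fin n → ℂ)
    (hpm : ∀ ℓ, a ℓ = 1 ∨ a ℓ = -1) (h0 : a 0 = 1)
    (habs : ‖∑ ℓ, a ℓ‖ = n) : ∀ ℓ, a ℓ = 1 := by
  set ε : Fin n → ℝ := fun ℓ => if a ℓ = 1 then 1 else -1 with hε
  have hcast : ∀ ℓ, (ε ℓ : ℂ) = a ℓ := by
    intro ℓ
    rcases hpm ℓ with h | h <;> simp [hε, h] <;> norm_num
  have hsum : (∑ ℓ, a ℓ) = ((∑ ℓ, ε ℓ : ℝ) : ℂ) := by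
    push_cast
    exact Finset.sum_congr rfl fun ℓ _ => (hcast ℓ).symm
  have habs' : |∑ ℓ, ε ℓ| = (n : ℝ) := by
    rw [hsum, Complex.norm_real, Real.norm_eq_abs] at habs
    exact habs
  have hle : ∀ ℓ, ε ℓ ≤ 1 := by
    intro ℓ; rcases hpm ℓ with h | h <;> simp [hε, h] <;> norm_num
  rcases abs_eq (by positivity : (0:ℝ) ≤ (n:ℝ)) |>.mp habs' with hS | hS
  · -- sum = n : each term is 1
    have hz : ∑ ℓ : Fin n, (1 - ε ℓ) = 0 := by
      rw [Finset.sum_sub_distrib, hS]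
      simp
    have := (Finset.sum_eq_zero_iff_of_nonneg (fun ℓ _ => by linarith [hle ℓ])).mp hz
    intro ℓ
    have hℓ : 1 - ε ℓ = 0 := this ℓ (Finset.mem_univ ℓ)
    have hε1 : ε ℓ = 1 := by linarith
    rw [← hcast ℓ, hε1, Complex.ofReal_one]
  · -- sum = -n : contradiction with a 0 = 1
    exfalso
    have hge : ∀ ℓ, -1 ≤ ε ℓ := by
      intro ℓ; rcases hpm ℓ with h | h <;> simp [hε, h] <;> norm_num
    have hz : ∑ ℓ : Fin n, (ε ℓ + 1) = 0 := by
      rw [Finset.sum_add_distrib, hS]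
      simp
    have := (Finset.sum_eq_zero_iff_of_nonneg (fun ℓ _ => by linarith [hge ℓ])).mp hz
    have h0' : ε 0 + 1 = 0 := this 0 (Finset.mem_univ 0)
    have : ε 0 = 1 := by simp [hε, h0]
    linarith

theorem pst_phase_is_one (n : ℕ) [NeZero n]
    (H : Matrix (Fin n) (Fin n) ℤ)
    (hent : ∀ u v, H u v = 1 ∨ H u v = -1)
    (hH : H * Hᵀ = (n : ℤ) • 1)
    (hrow : ∀ v, H 0 v = 1) (hcol : ∀ u, H u 0 = 1)
    (Λ : Fin n → ℤ) (heven : ∀ ℓ, Even (Λ ℓ)) (hzero : Λ 0 = 0)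
    (L : Matrix (Fin n) (Fin n) ℝ)
    (hL : L = ((n : ℝ))⁻¹ •
      ((H.map (fun x => (x : ℝ))) * Matrix.diagonal (fun ℓ => ((Λ ℓ : ℤ) : ℝ)) *
        (H.map (fun x => (x : ℝ)))ᵀ))
    (j k : Fin n)
    (hpst : pstHalfPi L j k) :
    ∀ ℓ : Fin n,
      Complex.exp (Complex.I * ((Real.pi / 2 : ℝ) : ℂ) * ((Λ ℓ : ℤ) : ℂ)) *
        ((H j ℓ : ℤ) : ℂ) = ((H k ℓ : ℤ) : ℂ) := by
  have hn : (n : ℂ) ≠ 0 := Nat.cast_ne_zero.mpr (NeZero.ne n)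
  set t : ℂ := Complex.I * ((Real.pi / 2 : ℝ) : ℂ) with ht
  set Hc : Matrix (Fin n) (Fin n) ℂ := H.map (fun x => (x : ℂ)) with hHc
  -- complexified L
  have hmap : L.map (fun x : ℝ => (x : ℂ)) =
      ((n : ℂ))⁻¹ • (Hc * Matrix.diagonal (fun ℓ => ((Λ ℓ : ℤ) : ℂ)) * Hcᵀ) := by
    subst hL
    ext i j'
    simp only [Matrix.map_apply, Matrix.smul_apply, Matrix.mul_apply,
      Matrix.diagonal_apply, Matrix.transpose_apply, hHc, smul_eq_mul,
      Finset.sum_mul, Finset.mul_sum]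
    push_cast
    simp [apply_ite (fun x : ℝ => (x : ℂ))]
  -- Hc * Hcᵀ = n • 1
  have hHH : Hc * Hcᵀ = (n : ℂ) • 1 := by
    have := congrArg (fun M : Matrix (Fin n) (Fin n) ℤ => M.map (fun x : ℤ => (x : ℂ))) hH
    ext i j'
    have h2 := congrFun (congrFun this i) j'
    simp only [Matrix.map_apply, Matrix.mul_apply, Matrix.transpose_apply,
      Matrix.smul_apply, Matrix.one_apply, smul_eq_mul] at h2 ⊢
    push_cast at h2
    simp only [hHc, Matrix.map_apply]
    rw [← h2]
  have hinv : Hc * ((n : ℂ)⁻¹ • Hcᵀ) = 1 := by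
    rw [Matrix.mul_smul, hHH, smul_smul, inv_mul_cancel₀ hn, one_smul]
  have hU : IsUnit Hc := by
    have hinv' : ((n : ℂ)⁻¹ • Hcᵀ) * Hc = 1 := mul_eq_one_comm.mp hinv
    exact ⟨⟨Hc, (n : ℂ)⁻¹ • Hcᵀ, hinv, hinv'⟩, rfl⟩
  have hHinv : Hc⁻¹ = (n : ℂ)⁻¹ • Hcᵀ := Matrix.inv_eq_right_inv hinv
  -- conjugation form
  have hconj : t • L.map (fun x : ℝ => (x : ℂ)) =
      Hc * Matrix.diagonal (fun ℓ => t * ((Λ ℓ : ℤ) : ℂ)) * Hc⁻¹ := by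
    rw [hmap, hHinv]
    have hd : Matrix.diagonal (fun ℓ => t * ((Λ ℓ : ℤ) : ℂ)) =
        t • Matrix.diagonal (fun ℓ => ((Λ ℓ : ℤ) : ℂ)) := by
      rw [← Matrix.diagonal_smul]
      rfl
    rw [hd]
    simp only [Matrix.mul_smul, Matrix.smul_mul, smul_smul]
    congr 1
    ring
  -- exponential
  have hexp : NormedSpace.exp (t • L.map (fun x : ℝ => (x : ℂ))) =
      Hc * Matrix.diagonal (fun ℓ => Complex.exp (t * ((Λ ℓ : ℤ) : ℂ))) * Hc⁻¹ := by
    have hfun : (NormedSpace.exp fun ℓ => t * ((Λ ℓ : ℤ) : ℂ)) =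
        fun ℓ => Complex.exp (t * ((Λ ℓ : ℤ) : ℂ)) := by
      funext ℓ
      rw [Pi.coe_exp, Complex.exp_eq_exp_ℂ]
    rw [hconj, Matrix.exp_conj Hc _ hU, Matrix.exp_diagonal, hfun]
  -- entry formula
  have hjk : (NormedSpace.exp (t • L.map (fun x : ℝ => (x : ℂ)))) j k =
      (n : ℂ)⁻¹ * ∑ ℓ, Complex.exp (t * ((Λ ℓ : ℤ) : ℂ)) * ((H j ℓ : ℤ) : ℂ) *
        ((H k ℓ : ℤ) : ℂ) := by
    rw [hexp, hHinv]
    simp only [Matrix.mul_apply, Matrix.mul_diagonal, Matrix.smul_apply,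
      Matrix.transpose_apply, smul_eq_mul, hHc, Matrix.map_apply, Finset.mul_sum,
      Matrix.diagonal_apply, mul_ite, mul_zero, ite_mul, zero_mul,
      Finset.sum_ite_eq, Finset.sum_ite_eq', Finset.mem_univ, if_true]
    apply Finset.sum_congr rfl
    intro ℓ _
    ring
  -- the terms
  set a : Fin n → ℂ := fun ℓ =>
    Complex.exp (t * ((Λ ℓ : ℤ) : ℂ)) * ((H j ℓ : ℤ) : ℂ) * ((H k ℓ : ℤ) : ℂ)
    with ha
  have hexp_pm : ∀ ℓ, Complex.exp (t * ((Λ ℓ : ℤ) : ℂ)) = 1 ∨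
      Complex.exp (t * ((Λ ℓ : ℤ) : ℂ)) = -1 := by
    intro ℓ
    obtain ⟨m, hm⟩ := heven ℓ
    have harg : t * ((Λ ℓ : ℤ) : ℂ) = (m : ℂ) * ((Real.pi : ℂ) * Complex.I) := by
      rw [ht, hm]
      push_cast
      ring
    rw [harg, Complex.exp_int_mul, Complex.exp_pi_mul_I]
    rcases Int.even_or_odd m with he | ho
    · left; exact he.neg_one_zpow
    · right; exact ho.neg_one_zpow
  have hpm : ∀ ℓ, a ℓ = 1 ∨ a ℓ = -1 := by
    intro ℓ
    have h1 : ((H j ℓ : ℤ) : ℂ) = 1 ∨ ((H j ℓ : ℤ) : ℂ) = -1 := by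
      rcases hent j ℓ with h | h <;> simp [h]
    have h2 : ((H k ℓ : ℤ) : ℂ) = 1 ∨ ((H k ℓ : ℤ) : ℂ) = -1 := by
      rcases hent k ℓ with h | h <;> simp [h]
    rcases hexp_pm ℓ with h3 | h3 <;> rcases h1 with h1 | h1 <;>
      rcases h2 with h2 | h2 <;> simp [ha, h1, h2, h3]
  have h0 : a 0 = 1 := by
    simp [ha, hzero, hrow, hcol]
  have habs : ‖∑ ℓ, a ℓ‖ = n := by
    have := hpst
    unfold pstHalfPi at this
    rw [← ht, hjk] at this
    rw [show (∑ ℓ, a ℓ) = (n : ℂ) * ((n : ℂ)⁻¹ * ∑ ℓ, a ℓ) by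
      rw [← mul_assoc, mul_inv_cancel₀ hn, one_mul]]
    rw [norm_mul, this, mul_one, Complex.norm_natCast]
  have hall : ∀ ℓ, a ℓ = 1 := all_one_of_abs_sum n a hpm h0 habs
  intro ℓ
  have hA := hall ℓ
  simp only [ha] at hA
  rcases hent k ℓ with h | h
  · rw [h] at hA ⊢
    push_cast at hA ⊢
    linear_combination hA
  · rw [h] at hA ⊢
    push_cast at hA ⊢
    linear_combination -hA
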